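/- Let V be a finite set, L a set of colors, 0, γ two distinct elements not in L, and φ, Φ¹, Φ² : V × V → L ∪ {0, γ} symmetric functions whose value is 0 exactly on the diagonal. Let K ⊆ V, and suppose that every pair (u,v) with Φ¹(u,v) ≠ Φ²(u,v) has u ∈ K or v ∈ K. Then, with obj(Φ) = |{ {u,v} : u ≠ v, φ(u,v) ≠ Φ(u,v) }| and d_0^K(f,g) = |{v ∈ V : f(v) ≠ g(v)}| + |{v ∈ V \ K : f(v) ≠ g(v)}|, one has obj(Φ¹) − obj(Φ²) = (1/2) · Σ_{u ∈ K} ( d_0^K(φ_u, Φ¹_u) − d_0^K(φ_u, Φ²_u) ) as an identity of integers. -/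

import Mathlib

open scoped Classical
set_option maxRecDepth 8000
set_option maxHeartbeats 1000000

lemma sym2_double_count {V L : Type*} [Fintype V] (φ Φ : V → V → Option (Option L))
    (hφ : ∀ u v, φ u v = φ v u) (hΦ : ∀ u v, Φ u v = Φ v u) :
    (Finset.univ.filter fun p : V × V => p.1 ≠ p.2 ∧ φ p.1 p.2 ≠ Φ p.1 p.2).card
      = 2 * (Finset.univ.filter fun e : Sym2 V =>
          ∃ u v : V, e = s(u, v) ∧ u ≠ v ∧ φ u v ≠ Φ u v).card := by
  classical
  have hsymm : ∀ u v : V, (u ≠ v ∧ φ u v ≠ Φ u v) → (v ≠ u ∧ φ v u ≠ Φ v u) :=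
    fun u v h => ⟨h.1.symm, by rw [hφ v u, hΦ v u]; exact h.2⟩
  rw [Finset.card_eq_sum_card_fiberwise
    (f := fun p : V × V => s(p.1, p.2))
    (t := Finset.univ.filter fun e : Sym2 V =>
        ∃ u v : V, e = s(u, v) ∧ u ≠ v ∧ φ u v ≠ Φ u v)
    (by
      intro p hp
      simp only [Finset.mem_coe, Finset.mem_filter, Finset.mem_univ, true_and] at hp ⊢
      exact ⟨p.1, p.2, rfl, hp⟩)]
  rw [Finset.sum_congr rfl (g := fun _ => 2), Finset.sum_const, Finset.card_filter,
    smul_eq_mul]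
  · ring
  · intro e he
    simp only [Finset.mem_filter, Finset.mem_univ, true_and] at he
    obtain ⟨u, v, rfl, hP⟩ := he
    have huv : u ≠ v := hP.1
    have : (Finset.univ.filter fun p : V × V =>
          p.1 ≠ p.2 ∧ φ p.1 p.2 ≠ Φ p.1 p.2).filter
        (fun p => s(p.1, p.2) = s(u, v)) = {(u, v), (v, u)} := by
      ext p
      simp only [Finset.mem_filter, Finset.mem_univ, true_and, Finset.mem_insert,
        Finset.mem_singleton, Sym2.eq_iff, Prod.ext_iff]
      constructor
      · rintro ⟨hp, (⟨h1, h2⟩ | ⟨h1, h2⟩)⟩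
        · left; exact ⟨h1, h2⟩
        · right; exact ⟨h1, h2⟩
      · rintro (⟨h1, h2⟩ | ⟨h1, h2⟩)
        · refine ⟨?_, Or.inl ⟨h1, h2⟩⟩; rw [h1, h2]; exact hP
        · refine ⟨?_, Or.inr ⟨h1, h2⟩⟩; rw [h1, h2]; exact hsymm u v hP
    rw [this, Finset.card_insert_of_notMem, Finset.card_singleton]
    simp [Prod.ext_iff, huv]

lemma filter_inst {α : Type*} (p : α → Prop) (h₁ h₂ : DecidablePred p) (s : Finset α) :
    @Finset.filter α p h₁ s = @Finset.filter α p h₂ s := by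
  have : h₁ = h₂ := Subsingleton.elim _ _
  rw [this]

/-- if the two symmetric clusterings `Φ¹` and `Φ²` differ only on pairs meeting
a set `K`, then the difference of their disagreement costs against `φ` equals half the sum
over `u ∈ K` of the differences of the weighted local costs `d_0^K`, where
`d_0^K(f,g) = |{v : f v ≠ g v}| + |{v ∉ K : f v ≠ g v}|` (vertices outside `K` counted
twice). The codomain `L ∪ {0, γ}` is modeled by `Option (Option L)` with `none = 0`,
`some none = γ`. -/
theorem obj_diff_eq_half_sum_d0K {V L : Type*} [Fintype V]
    (φ Φ₁ Φ₂ : V → V → Option (Option L))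
    (hφsymm : ∀ u v : V, φ u v = φ v u)
    (hΦ₁symm : ∀ u v : V, Φ₁ u v = Φ₁ v u)
    (hΦ₂symm : ∀ u v : V, Φ₂ u v = Φ₂ v u)
    (hφdiag : ∀ u v : V, φ u v = none ↔ u = v)
    (hΦ₁diag : ∀ u v : V, Φ₁ u v = none ↔ u = v)
    (hΦ₂diag : ∀ u v : V, Φ₂ u v = none ↔ u = v)
    (K : Finset V)
    (hK : ∀ u v : V, Φ₁ u v ≠ Φ₂ u v → u ∈ K ∨ v ∈ K) :
    (((Finset.univ.filter fun e : Sym2 V =>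
          ∃ u v : V, e = s(u, v) ∧ u ≠ v ∧ φ u v ≠ Φ₁ u v).card : ℝ)) -
      ((Finset.univ.filter fun e : Sym2 V =>
          ∃ u v : V, e = s(u, v) ∧ u ≠ v ∧ φ u v ≠ Φ₂ u v).card : ℝ) =
    (1 / 2) * ∑ u ∈ K,
      ((((Finset.univ.filter fun v : V => φ u v ≠ Φ₁ u v).card +
          (Finset.univ.filter fun v : V => v ∉ K ∧ φ u v ≠ Φ₁ u v).card : ℕ) : ℝ) -
        (((Finset.univ.filter fun v : V => φ u v ≠ Φ₂ u v).card +
          (Finset.univ.filter fun v : V => v ∉ K ∧ φ u v ≠ Φ₂ u v).card : ℕ) : ℝ)) := by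
  classical
  -- D u v : the local difference of disagreement indicators
  set D : V → V → ℝ := fun u v =>
    (if φ u v ≠ Φ₁ u v then (1 : ℝ) else 0) - (if φ u v ≠ Φ₂ u v then (1 : ℝ) else 0) with hD
  have hDsymm : ∀ u v, D u v = D v u := by
    intro u v
    simp only [hD, hφsymm u v, hΦ₁symm u v, hΦ₂symm u v]
  have hD0 : ∀ u v, u ∉ K → v ∉ K → D u v = 0 := by
    intro u v hu hv
    have h : Φ₁ u v = Φ₂ u v := by
      by_contra h; rcases hK u v h with h' | h' <;> tauto
    simp [hD, h]
  -- twice the Sym2 count equals the ordered-pair sum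
  have key : ∀ (Φ : V → V → Option (Option L)), (∀ u v, Φ u v = Φ v u) →
      (∀ u v, Φ u v = none ↔ u = v) →
      2 * ((Finset.univ.filter fun e : Sym2 V =>
          ∃ u v : V, e = s(u, v) ∧ u ≠ v ∧ φ u v ≠ Φ u v).card : ℝ)
      = ∑ u : V, ((Finset.univ.filter fun v : V => φ u v ≠ Φ u v).card : ℝ) := by
    intro Φ hsym hdiag
    have h1 := sym2_double_count φ Φ hφsymm hsym
    have hflt : ∀ u : V, (Finset.univ.filter fun v : V => u ≠ v ∧ φ u v ≠ Φ u v)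
        = (Finset.univ.filter fun v : V => φ u v ≠ Φ u v) := by
      intro u
      apply Finset.filter_congr
      intro v _
      constructor
      · exact fun h => h.2
      · intro h
        refine ⟨?_, h⟩
        rintro rfl
        exact h (by rw [(hφdiag u u).2 rfl, (hdiag u u).2 rfl])
    have h2 : (Finset.univ.filter fun p : V × V => p.1 ≠ p.2 ∧ φ p.1 p.2 ≠ Φ p.1 p.2).card
        = ∑ u : V, (Finset.univ.filter fun v : V => φ u v ≠ Φ u v).card := by
      calc (Finset.univ.filter fun p : V × V => p.1 ≠ p.2 ∧ φ p.1 p.2 ≠ Φ p.1 p.2).card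
          = ∑ u : V, ∑ v : V, if u ≠ v ∧ φ u v ≠ Φ u v then 1 else 0 := by
            rw [Finset.card_filter, Fintype.sum_prod_type'
              (f := fun u v : V => if u ≠ v ∧ φ u v ≠ Φ u v then (1 : ℕ) else 0)]
        _ = ∑ u : V, (Finset.univ.filter fun v : V => u ≠ v ∧ φ u v ≠ Φ u v).card :=
            Finset.sum_congr rfl fun u _ => (Finset.card_filter _ _).symm
        _ = _ := Finset.sum_congr rfl (fun u _ => by rw [hflt u])
    have h3 := (h2.symm.trans h1).symm
    have h4 := congrArg (Nat.cast : ℕ → ℝ) h3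
    push_cast at h4
    exact h4
  -- reduce to an identity about sums of D
  have hcardD : ∀ u : V,
      ((Finset.univ.filter fun v : V => φ u v ≠ Φ₁ u v).card : ℝ)
        - ((Finset.univ.filter fun v : V => φ u v ≠ Φ₂ u v).card : ℝ) = ∑ v : V, D u v := by
    intro u
    rw [Finset.card_filter, Finset.card_filter]
    push_cast
    rw [← Finset.sum_sub_distrib]
  have hcardD' : ∀ u : V,
      ((Finset.univ.filter fun v : V => v ∉ K ∧ φ u v ≠ Φ₁ u v).card : ℝ)
        - ((Finset.univ.filter fun v : V => v ∉ K ∧ φ u v ≠ Φ₂ u v).card : ℝ)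
        = ∑ v ∈ Kᶜ, D u v := by
    intro u
    have hKc : (Kᶜ : Finset V) = Finset.univ.filter fun v => v ∉ K := by
      ext v; simp
    rw [hKc, Finset.sum_filter, Finset.card_filter, Finset.card_filter]
    push_cast
    rw [← Finset.sum_sub_distrib]
    refine Finset.sum_congr rfl fun v _ => ?_
    by_cases hv : v ∈ K <;> simp [hv, hD]
  -- the core combinatorial identity
  have core : ∑ u : V, ∑ v : V, D u v = ∑ u ∈ K, (∑ v : V, D u v + ∑ v ∈ Kᶜ, D u v) := by
    have split : ∑ u : V, ∑ v : V, D u v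
        = ∑ u ∈ K, ∑ v : V, D u v + ∑ u ∈ Kᶜ, ∑ v : V, D u v :=
      (Finset.sum_add_sum_compl K _).symm
    have hout : ∑ u ∈ Kᶜ, ∑ v : V, D u v = ∑ u ∈ K, ∑ v ∈ Kᶜ, D u v := by
      calc ∑ u ∈ Kᶜ, ∑ v : V, D u v
          = ∑ u ∈ Kᶜ, (∑ v ∈ K, D u v + ∑ v ∈ Kᶜ, D u v) := by
            refine Finset.sum_congr rfl fun u hu => ?_
            exact (Finset.sum_add_sum_compl K _).symm
        _ = ∑ u ∈ Kᶜ, ∑ v ∈ K, D u v := by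
            refine Finset.sum_congr rfl fun u hu => ?_
            have : ∑ v ∈ Kᶜ, D u v = 0 := by
              refine Finset.sum_eq_zero fun v hv => ?_
              exact hD0 u v (Finset.mem_compl.mp hu) (Finset.mem_compl.mp hv)
            rw [this, add_zero]
        _ = ∑ v ∈ K, ∑ u ∈ Kᶜ, D u v := Finset.sum_comm
        _ = ∑ u ∈ K, ∑ v ∈ Kᶜ, D u v := by
            refine Finset.sum_congr rfl fun v _ => Finset.sum_congr rfl fun u _ => hDsymm u v
    rw [split, hout, ← Finset.sum_add_distrib]
  -- put everything together
  have e1 := key Φ₁ hΦ₁symm hΦ₁diag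
  have e2 := key Φ₂ hΦ₂symm hΦ₂diag
  have lhs2 : 2 * ((((Finset.univ.filter fun e : Sym2 V =>
          ∃ u v : V, e = s(u, v) ∧ u ≠ v ∧ φ u v ≠ Φ₁ u v).card : ℝ)) -
      ((Finset.univ.filter fun e : Sym2 V =>
          ∃ u v : V, e = s(u, v) ∧ u ≠ v ∧ φ u v ≠ Φ₂ u v).card : ℝ))
      = ∑ u : V, ∑ v : V, D u v := by
    rw [mul_sub, e1, e2, ← Finset.sum_sub_distrib]
    exact Finset.sum_congr rfl fun u _ => hcardD u
  have rhs2 : ∑ u ∈ K,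
      ((((Finset.univ.filter fun v : V => φ u v ≠ Φ₁ u v).card +
          (Finset.univ.filter fun v : V => v ∉ K ∧ φ u v ≠ Φ₁ u v).card : ℕ) : ℝ) -
        (((Finset.univ.filter fun v : V => φ u v ≠ Φ₂ u v).card +
          (Finset.univ.filter fun v : V => v ∉ K ∧ φ u v ≠ Φ₂ u v).card : ℕ) : ℝ))
      = ∑ u ∈ K, (∑ v : V, D u v + ∑ v ∈ Kᶜ, D u v) := by
    refine Finset.sum_congr rfl fun u _ => ?_
    push_cast
    rw [← hcardD u, ← hcardD' u]
    ring
  rw [rhs2, ← core, ← lhs2]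
  ring
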